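/- The singular sets of the dual flat fronts f = AA* and g = A e₃ A* coincide: f' × f_z̄ = 0 if and only if g' × g_z̄ = 0, and both are equivalent to λ(z) = |α(z)|² - |β(z)|² = 0 (given that A(z) is invertible). -/

import Mathlib

open Matrix Complex ComplexConjugate

def e3 : Matrix (Fin 2) (Fin 2) ℂ := !![1, 0; 0, -1]

/-- `X × Y = (i/2)(X p⁻¹ Y - Y p⁻¹ X)` at base point `p`. -/
noncomputable def cross (p X Y : Matrix (Fin 2) (Fin 2) ℂ) :
    Matrix (Fin 2) (Fin 2) ℂ :=
  (Complex.I / 2) • (X * p⁻¹ * Y - Y * p⁻¹ * X)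

/-- The singular sets of the dual flat fronts `f = AAᴴ` and `g = Ae₃Aᴴ` coincide:
the area density `f' × f_z̄` vanishes iff `g' × g_z̄` does, and both are
equivalent to `λ = |α|² - |β|² = 0` (given `A` invertible, `det A = 1`). -/
theorem singular_sets_coincide (A : Matrix (Fin 2) (Fin 2) ℂ) (hA : A.det = 1)
    (α β : ℂ) (hα : α ≠ 0) (hβ : β ≠ 0) :
    (cross (A * Aᴴ) (A * !![0, α; β, 0] * Aᴴ) (A * (!![0, α; β, 0])ᴴ * Aᴴ) = 0
      ↔ cross (A * e3 * Aᴴ) (A * !![0, α; β, 0] * e3 * Aᴴ)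
          (A * e3 * (!![0, α; β, 0])ᴴ * Aᴴ) = 0) ∧
    (cross (A * Aᴴ) (A * !![0, α; β, 0] * Aᴴ) (A * (!![0, α; β, 0])ᴴ * Aᴴ) = 0
      ↔ α * conj α - β * conj β = 0) ∧
    (cross (A * e3 * Aᴴ) (A * !![0, α; β, 0] * e3 * Aᴴ)
          (A * e3 * (!![0, α; β, 0])ᴴ * Aᴴ) = 0
      ↔ α * conj α - β * conj β = 0) := by
  set D : Matrix (Fin 2) (Fin 2) ℂ := !![0, α; β, 0] with hD
  set lam : ℂ := α * conj α - β * conj β with hlam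
  have hAunit : IsUnit A.det := by rw [hA]; exact isUnit_one
  have hAH : IsUnit Aᴴ.det := by rw [Matrix.det_conjTranspose, hA]; simp
  have he3sq : e3 * e3 = 1 := by
    ext i j; fin_cases i <;> fin_cases j <;>
      simp [e3, Matrix.mul_apply, Fin.sum_univ_two, Matrix.one_apply]
  have he3 : e3⁻¹ = e3 := Matrix.inv_eq_right_inv he3sq
  have hDH : Dᴴ = !![0, conj β; conj α, 0] := by
    ext i j; fin_cases i <;> fin_cases j <;> simp [hD, Matrix.conjTranspose_apply]
  have hDD : D * Dᴴ - Dᴴ * D = lam • e3 := by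
    rw [hDH]; ext i j; fin_cases i <;> fin_cases j <;>
      simp [hD, hDH, e3, Matrix.mul_apply, Fin.sum_univ_two] <;> ring
  have hDeD : D * e3 * Dᴴ - e3 * Dᴴ * e3 * (D * e3) = (-lam) • 1 := by
    rw [hDH]; ext i j; fin_cases i <;> fin_cases j <;>
      simp [hD, hDH, e3, Matrix.mul_apply, Fin.sum_univ_two, Matrix.one_apply] <;> ring
  have key1 : cross (A * Aᴴ) (A * D * Aᴴ) (A * Dᴴ * Aᴴ)
      = (Complex.I / 2 * lam) • (A * e3 * Aᴴ) := by
    unfold cross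
    rw [Matrix.mul_inv_rev]
    have c1 : ∀ M N : Matrix (Fin 2) (Fin 2) ℂ,
        A * M * Aᴴ * (Aᴴ⁻¹ * A⁻¹) * (A * N * Aᴴ) = A * (M * N) * Aᴴ := by
      intro M N
      simp only [Matrix.mul_assoc]
      rw [Matrix.mul_nonsing_inv_cancel_left _ _ hAH,
          Matrix.nonsing_inv_mul_cancel_left _ _ hAunit]
    rw [c1, c1, ← Matrix.sub_mul, ← Matrix.mul_sub, hDD]
    rw [Matrix.mul_smul, Matrix.smul_mul, smul_smul]
  have key2 : cross (A * e3 * Aᴴ) (A * D * e3 * Aᴴ) (A * e3 * Dᴴ * Aᴴ)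
      = (Complex.I / 2 * (-lam)) • (A * Aᴴ) := by
    unfold cross
    rw [Matrix.mul_inv_rev, Matrix.mul_inv_rev, he3]
    have c1 : ∀ M N : Matrix (Fin 2) (Fin 2) ℂ,
        A * M * Aᴴ * (Aᴴ⁻¹ * (e3 * A⁻¹)) * (A * N * Aᴴ) = A * (M * e3 * N) * Aᴴ := by
      intro M N
      simp only [Matrix.mul_assoc]
      rw [Matrix.mul_nonsing_inv_cancel_left _ _ hAH,
          Matrix.nonsing_inv_mul_cancel_left _ _ hAunit]
    have e1 : A * D * e3 * Aᴴ = A * (D * e3) * Aᴴ := by simp [Matrix.mul_assoc]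
    have e2 : A * e3 * Dᴴ * Aᴴ = A * (e3 * Dᴴ) * Aᴴ := by simp [Matrix.mul_assoc]
    rw [e1, e2, c1, c1]
    have r1 : D * e3 * e3 * (e3 * Dᴴ) = D * e3 * Dᴴ := by
      rw [Matrix.mul_assoc (D * e3) e3 _, ← Matrix.mul_assoc e3 e3 Dᴴ, he3sq,
          Matrix.one_mul]
    rw [r1, ← Matrix.sub_mul, ← Matrix.mul_sub, hDeD]
    rw [Matrix.mul_smul, Matrix.smul_mul, smul_smul, Matrix.mul_one]
  -- nonvanishing of the two frames
  have hI2 : Complex.I / 2 ≠ 0 := by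
    simp [div_eq_zero_iff, Complex.I_ne_zero]
  have hf : A * e3 * Aᴴ ≠ 0 := by
    intro h
    have : (A * e3 * Aᴴ).det = 0 := by rw [h]; simp
    rw [Matrix.det_mul, Matrix.det_mul, hA, Matrix.det_conjTranspose, hA] at this
    simp [e3, Matrix.det_fin_two_of] at this
  have hg : A * Aᴴ ≠ 0 := by
    intro h
    have : (A * Aᴴ).det = 0 := by rw [h]; simp
    rw [Matrix.det_mul, hA, Matrix.det_conjTranspose, hA] at this
    simp at this
  have h1 : cross (A * Aᴴ) (A * D * Aᴴ) (A * Dᴴ * Aᴴ) = 0 ↔ lam = 0 := by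
    rw [key1, smul_eq_zero]
    constructor
    · rintro (h | h)
      · rcases mul_eq_zero.mp h with h' | h'
        · exact absurd h' hI2
        · exact h'
      · exact absurd h hf
    · intro h; left; rw [h, mul_zero]
  have h2 : cross (A * e3 * Aᴴ) (A * D * e3 * Aᴴ) (A * e3 * Dᴴ * Aᴴ) = 0 ↔ lam = 0 := by
    rw [key2, smul_eq_zero]
    constructor
    · rintro (h | h)
      · rcases mul_eq_zero.mp h with h' | h'
        · exact absurd h' hI2
        · exact neg_eq_zero.mp h'
      · exact absurd h hg
    · intro h; left; rw [h, neg_zero, mul_zero]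
  exact ⟨h1.trans h2.symm, h1, h2⟩
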